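/- Let B, C : [0,T] → ℝ be differentiable with B(0) = 0, C(0) = 1, 0 < C(t) ≤ 1, P'(C(t)) > 0, and suppose they satisfy the system B'(t) = k(k−1)·(C(t)−B(t))·P''(C(t))/P'(C(t))² and C'(t) = −k/P'(C(t)) for all t ∈ [0,T]. Then B(t) = Q(C(t))·P'(C(t))^{k−1} for all t ∈ [0,T]. -/

import Mathlib

open Finset

/-- The generating polynomial `P(x) = ∑_{i=1}^Δ ζ_i x^i` of the degree sequence. -/
noncomputable def Ppoly (Δ : ℕ) (ζ : ℕ → ℝ) (x : ℝ) : ℝ :=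
  ∑ i ∈ Finset.Icc 1 Δ, ζ i * x ^ i

/-- The derivative `P'(x) = ∑_{i=1}^Δ i ζ_i x^{i-1}`. -/
noncomputable def Pderiv (Δ : ℕ) (ζ : ℕ → ℝ) (x : ℝ) : ℝ :=
  ∑ i ∈ Finset.Icc 1 Δ, ζ i * i * x ^ (i - 1)

/-- The second derivative `P''(x) = ∑_{i=1}^Δ i(i-1) ζ_i x^{i-2}`. -/
noncomputable def Pderiv2 (Δ : ℕ) (ζ : ℕ → ℝ) (x : ℝ) : ℝ :=
  ∑ i ∈ Finset.Icc 1 Δ, ζ i * i * (i - 1) * x ^ (i - 2)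

/-- `Q(x) = ∫_x^1 (k-1) w P''(w) / P'(w)^k dw`. -/
noncomputable def Qfun (k Δ : ℕ) (ζ : ℕ → ℝ) (x : ℝ) : ℝ :=
  ∫ w in x..1, ((k : ℝ) - 1) * w * Pderiv2 Δ ζ w / (Pderiv Δ ζ w) ^ k

/-- `h(x) = x / P'(x)^{k-1} - Q(x)`. -/
noncomputable def hfun (k Δ : ℕ) (ζ : ℕ → ℝ) (x : ℝ) : ℝ :=
  x / (Pderiv Δ ζ x) ^ (k - 1) - Qfun k Δ ζ x

lemma hasDerivAt_Pderiv (Δ : ℕ) (ζ : ℕ → ℝ) (x : ℝ) :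
    HasDerivAt (Pderiv Δ ζ) (Pderiv2 Δ ζ x) x := by
  have h : HasDerivAt (fun y => ∑ i ∈ Finset.Icc 1 Δ, ζ i * (i:ℝ) * y ^ (i - 1))
      (∑ i ∈ Finset.Icc 1 Δ, ζ i * (i:ℝ) * (((i - 1 : ℕ):ℝ) * x ^ (i - 1 - 1))) x := by
    apply HasDerivAt.fun_sum
    intro i _
    exact (hasDerivAt_pow (i - 1) x).const_mul _
  refine h.congr_deriv ?_
  unfold Pderiv2
  refine Finset.sum_congr rfl fun i hi => ?_
  have h1 : 1 ≤ i := (Finset.mem_Icc.mp hi).1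
  have : ((i - 1 : ℕ):ℝ) = (i:ℝ) - 1 := by push_cast [Nat.cast_sub h1]; ring
  rw [this]
  have : i - 1 - 1 = i - 2 := by omega
  rw [this]; ring

lemma Pderiv_pos (Δ : ℕ) (hΔ : 2 ≤ Δ) (ζ : ℕ → ℝ)
    (hζ : ∀ i ∈ Finset.Icc 1 Δ, 0 ≤ ζ i) (hζΔ : 0 < ζ Δ)
    {x : ℝ} (hx : 0 < x) : 0 < Pderiv Δ ζ x := by
  unfold Pderiv
  apply Finset.sum_pos'
  · intro i hi
    exact mul_nonneg (mul_nonneg (hζ i hi) (Nat.cast_nonneg i)) (pow_pos hx _).le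
  · refine ⟨Δ, Finset.mem_Icc.mpr ⟨by omega, le_rfl⟩, ?_⟩
    have : (0:ℝ) < (Δ:ℝ) := by positivity
    positivity

lemma continuous_Pderiv2 (Δ : ℕ) (ζ : ℕ → ℝ) : Continuous (Pderiv2 Δ ζ) := by
  unfold Pderiv2
  exact continuous_finset_sum _ fun i _ =>
    Continuous.mul continuous_const (continuous_pow _)

lemma continuousOn_F (k Δ : ℕ) (hΔ : 2 ≤ Δ) (ζ : ℕ → ℝ)
    (hζ : ∀ i ∈ Finset.Icc 1 Δ, 0 ≤ ζ i) (hζΔ : 0 < ζ Δ) :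
    ContinuousOn (fun w => ((k : ℝ) - 1) * w * Pderiv2 Δ ζ w / (Pderiv Δ ζ w) ^ k)
      (Set.Ioi 0) := by
  apply ContinuousOn.div
  · exact (Continuous.mul (continuous_const.mul continuous_id)
      (continuous_Pderiv2 Δ ζ)).continuousOn
  · exact ((hasDerivAt_Pderiv Δ ζ · |>.continuousAt) |> continuous_iff_continuousAt.mpr
      |>.pow k).continuousOn
  · intro x hx
    exact pow_ne_zero _ (Pderiv_pos Δ hΔ ζ hζ hζΔ hx).ne'

lemma hasDerivAt_Qfun (k Δ : ℕ) (hΔ : 2 ≤ Δ) (ζ : ℕ → ℝ)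
    (hζ : ∀ i ∈ Finset.Icc 1 Δ, 0 ≤ ζ i) (hζΔ : 0 < ζ Δ)
    {x : ℝ} (hx : 0 < x) :
    HasDerivAt (Qfun k Δ ζ)
      (-(((k : ℝ) - 1) * x * Pderiv2 Δ ζ x / (Pderiv Δ ζ x) ^ k)) x := by
  have hcont := continuousOn_F k Δ hΔ ζ hζ hζΔ
  have hsub : Set.uIcc x 1 ⊆ Set.Ioi (0:ℝ) := by
    intro w hw
    simp only [Set.mem_Ioi]
    calc (0:ℝ) < min x 1 := lt_min hx one_pos
    _ ≤ w := by simpa [Set.uIcc] using hw.1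
  have hint : IntervalIntegrable
      (fun w => ((k : ℝ) - 1) * w * Pderiv2 Δ ζ w / (Pderiv Δ ζ w) ^ k)
      MeasureTheory.volume x 1 := (hcont.mono hsub).intervalIntegrable
  exact intervalIntegral.integral_hasDerivAt_left hint
    (hcont.stronglyMeasurableAtFilter isOpen_Ioi x hx)
    (hcont.continuousAt (Ioi_mem_nhds hx))


/-- if `B(0) = 0`, `C(0) = 1`, `0 < C ≤ 1`, `P'(C) > 0`, and
`B' = k(k-1)(C-B)P''(C)/P'(C)²`, `C' = −k/P'(C)` on `[0,T]`, then
`B(t) = Q(C(t))·P'(C(t))^{k-1}`. -/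
theorem B_eq_Q_of_C (k Δ : ℕ) (hk : 2 ≤ k) (hΔ : 2 ≤ Δ) (ζ : ℕ → ℝ)
    (hζ : ∀ i ∈ Finset.Icc 1 Δ, 0 ≤ ζ i) (hζΔ : 0 < ζ Δ)
    (hsum : ∑ i ∈ Finset.Icc 1 Δ, ζ i = 1)
    (T : ℝ) (hT : 0 < T) (B C : ℝ → ℝ) (hB0 : B 0 = 0) (hC0 : C 0 = 1)
    (hCpos : ∀ t ∈ Set.Icc (0 : ℝ) T, 0 < C t)
    (hCle : ∀ t ∈ Set.Icc (0 : ℝ) T, C t ≤ 1)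
    (hPpos : ∀ t ∈ Set.Icc (0 : ℝ) T, 0 < Pderiv Δ ζ (C t))
    (hodeB : ∀ t ∈ Set.Icc (0 : ℝ) T,
      HasDerivWithinAt B
        ((k : ℝ) * ((k : ℝ) - 1) * (C t - B t) * Pderiv2 Δ ζ (C t) / (Pderiv Δ ζ (C t)) ^ 2)
        (Set.Icc 0 T) t)
    (hodeC : ∀ t ∈ Set.Icc (0 : ℝ) T,
      HasDerivWithinAt C (-(k : ℝ) / Pderiv Δ ζ (C t)) (Set.Icc 0 T) t) :
    ∀ t ∈ Set.Icc (0 : ℝ) T, B t = Qfun k Δ ζ (C t) * (Pderiv Δ ζ (C t)) ^ (k - 1) := by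
  obtain ⟨n, rfl⟩ : ∃ n, k = n + 2 := ⟨k - 2, by omega⟩
  set f : ℝ → ℝ := fun t => B t / (Pderiv Δ ζ (C t)) ^ (n + 1) with hf_def
  set g : ℝ → ℝ := fun t => Qfun (n + 2) Δ ζ (C t) with hg_def
  set D : ℝ → ℝ := fun t =>
    -(((n + 2 : ℕ) : ℝ) - 1) * C t * Pderiv2 Δ ζ (C t) / (Pderiv Δ ζ (C t)) ^ (n + 2)
      * (-((n + 2 : ℕ) : ℝ) / Pderiv Δ ζ (C t)) with hD_def
  have hfD : ∀ t ∈ Set.Icc (0 : ℝ) T, HasDerivWithinAt f (D t) (Set.Icc 0 T) t := by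
    intro t ht
    have hp := hPpos t ht
    have hq : HasDerivWithinAt (fun s => Pderiv Δ ζ (C s))
        (Pderiv2 Δ ζ (C t) * (-((n + 2 : ℕ) : ℝ) / Pderiv Δ ζ (C t))) (Set.Icc 0 T) t :=
      (hasDerivAt_Pderiv Δ ζ (C t)).comp_hasDerivWithinAt t (hodeC t ht)
    have hX := hq.pow (n + 1)
    have hdiv := (hodeB t ht).div hX (pow_ne_zero _ hp.ne')
    refine hdiv.congr_deriv ?_
    have hpne : Pderiv Δ ζ (C t) ≠ 0 := hp.ne'
    simp only [hD_def, Nat.add_sub_cancel, Pi.pow_apply]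
    push_cast
    field_simp
    ring
  have hgD : ∀ t ∈ Set.Icc (0 : ℝ) T, HasDerivWithinAt g (D t) (Set.Icc 0 T) t := by
    intro t ht
    have h := ((hasDerivAt_Qfun (n + 2) Δ hΔ ζ hζ hζΔ
      (hCpos t ht)).comp_hasDerivWithinAt t (hodeC t ht))
    refine h.congr_deriv ?_
    simp only [hD_def]
    ring
  have key : ∀ t ∈ Set.Icc (0 : ℝ) T, f t = g t := by
    apply eq_of_has_deriv_right_eq (f' := D)
    · intro t ht
      have ht' : t ∈ Set.Icc (0 : ℝ) T := Set.mem_Icc.mpr ⟨ht.1, ht.2.le⟩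
      refine (hfD t ht').mono_of_mem_nhdsWithin ?_
      refine Filter.mem_of_superset
        (Filter.inter_mem (nhdsWithin_le_nhds (Iio_mem_nhds ht.2)) self_mem_nhdsWithin) ?_
      rintro x ⟨hx1, hx2⟩
      exact ⟨le_trans ht.1 hx2, le_of_lt hx1⟩
    · intro t ht
      have ht' : t ∈ Set.Icc (0 : ℝ) T := Set.mem_Icc.mpr ⟨ht.1, ht.2.le⟩
      refine (hgD t ht').mono_of_mem_nhdsWithin ?_
      refine Filter.mem_of_superset
        (Filter.inter_mem (nhdsWithin_le_nhds (Iio_mem_nhds ht.2)) self_mem_nhdsWithin) ?_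
      rintro x ⟨hx1, hx2⟩
      exact ⟨le_trans ht.1 hx2, le_of_lt hx1⟩
    · exact fun t ht => (hfD t ht).continuousWithinAt
    · exact fun t ht => (hgD t ht).continuousWithinAt
    · simp only [hf_def, hg_def, hB0, hC0, zero_div, Qfun, intervalIntegral.integral_same]
  intro t ht
  have h := key t ht
  have hp := hPpos t ht
  simp only [hf_def, hg_def] at h
  rw [div_eq_iff (by positivity)] at h
  simpa [Nat.add_sub_cancel] using h
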